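/- For every digraph X, the spectral radius of its Hermitian adjacency matrix is at most the spectral radius of the (0,1)-adjacency matrix of its underlying graph: ρ(X) ≤ ρ(A(Γ(X))). -/

import Mathlib

open Matrix Complex

lemma rayleigh_bound {V : Type*} [Fintype V] [DecidableEq V] [Nonempty V]
    (A : Matrix V V ℝ) (hA : A.IsHermitian) (y : V → ℝ) :
    y ⬝ᵥ (A *ᵥ y) ≤
      (Finset.univ.sup' Finset.univ_nonempty fun i => |hA.eigenvalues i|) * (y ⬝ᵥ y) := by
  set M := (Finset.univ.sup' Finset.univ_nonempty fun i => |hA.eigenvalues i|) with hM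
  set U : Matrix V V ℝ := (hA.eigenvectorUnitary : Matrix V V ℝ) with hU
  set z : V → ℝ := star U *ᵥ y with hz
  have hyz : star y ᵥ* U = star z := by
    rw [hz, star_mulVec]; simp [Matrix.star_eq_conjTranspose]
  have key : y ⬝ᵥ (A *ᵥ y) = ∑ i, hA.eigenvalues i * (z i)^2 := by
    conv_lhs => rw [show y ⬝ᵥ (A *ᵥ y) = star y ⬝ᵥ (A *ᵥ y) by norm_num,
      hA.spectral_theorem]
    rw [Unitary.conjStarAlgAut_apply, ← mulVec_mulVec, ← mulVec_mulVec, dotProduct_mulVec, hyz, ← hz]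
    simp only [dotProduct, mulVec_diagonal, Matrix.diagonal, Matrix.mulVec, Function.comp]
    exact Finset.sum_congr rfl fun i _ => by simp [dotProduct, Matrix.diagonal]; ring
  have knorm : y ⬝ᵥ y = ∑ i, (z i)^2 := by
    have h1 : U * star U = 1 := (Matrix.mem_unitaryGroup_iff).mp hA.eigenvectorUnitary.2
    have : star z ⬝ᵥ z = star y ⬝ᵥ ((U * star U) *ᵥ y) := by
      conv_rhs => rw [← mulVec_mulVec, dotProduct_mulVec, hyz]
    rw [h1, one_mulVec] at this
    have hyy : star y ⬝ᵥ y = y ⬝ᵥ y := by norm_num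
    have hzz : star z ⬝ᵥ z = ∑ i, (z i)^2 := by
      simp [dotProduct, sq]
    rw [← hyy, ← this, hzz]
  rw [key, knorm, Finset.mul_sum]
  refine Finset.sum_le_sum fun i _ => ?_
  have h1 : |hA.eigenvalues i| ≤ M := by
    rw [hM]; exact Finset.le_sup' (fun i => |hA.eigenvalues i|) (Finset.mem_univ i)
  have h2 : (0:ℝ) ≤ (z i)^2 := sq_nonneg _
  calc hA.eigenvalues i * (z i)^2 ≤ |hA.eigenvalues i| * (z i)^2 := by
        exact mul_le_mul_of_nonneg_right (le_abs_self _) h2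
    _ ≤ M * (z i)^2 := mul_le_mul_of_nonneg_right h1 h2

/-- Hermitian adjacency matrix of a digraph given by its arc relation `E`. -/
def hermAdj {V : Type*} (E : V → V → Prop) [DecidableRel E] : Matrix V V ℂ :=
  fun u v =>
    if E u v ∧ E v u then 1
    else if E u v then Complex.I
    else if E v u then -Complex.I
    else 0

/-- The (real, symmetric) 0-1 adjacency matrix of the underlying graph of a digraph. -/
def adjUnderlying {V : Type*} (E : V → V → Prop) [DecidableRel E] : Matrix V V ℝ :=
  fun u v => if E u v ∨ E v u then 1 else 0

/-- The spectral radius of the Hermitian adjacency matrix of a digraph is at most the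
spectral radius of the adjacency matrix of its underlying graph. -/
theorem stmt8 {V : Type*} [Fintype V] [DecidableEq V] [Nonempty V]
    (E : V → V → Prop) [DecidableRel E] (hirr : ∀ v, ¬ E v v)
    (hH : (hermAdj E).IsHermitian) (hA : (adjUnderlying E).IsHermitian) :
    Finset.univ.sup' Finset.univ_nonempty (fun i => |hH.eigenvalues i|) ≤
      Finset.univ.sup' Finset.univ_nonempty (fun i => |hA.eigenvalues i|) := by
  obtain ⟨i0, -, hi0⟩ := Finset.exists_mem_eq_sup' Finset.univ_nonempty
    (fun i => |hH.eigenvalues i|)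
  rw [hi0]
  set x : V → ℂ := ⇑(hH.eigenvectorBasis i0) with hxdef
  set l : ℝ := hH.eigenvalues i0 with hl
  have hx : hermAdj E *ᵥ x = (l : ℂ) • x := by
    rw [hH.mulVec_eigenvectorBasis i0, ← hxdef]
    ext v
    simp [Complex.real_smul, hl]
  have hdot : star x ⬝ᵥ x = 1 := by
    have h1 := hH.eigenvectorBasis.orthonormal.1 i0
    have h2 : (inner ℂ (hH.eigenvectorBasis i0) (hH.eigenvectorBasis i0) : ℂ) = 1 := by
      rw [inner_self_eq_norm_sq_to_K, h1]; norm_num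
    rw [EuclideanSpace.inner_eq_star_dotProduct, dotProduct_comm] at h2
    exact h2
  set y : V → ℝ := fun v => ‖x v‖ with hy
  have hyy : y ⬝ᵥ y = 1 := by
    have : ((y ⬝ᵥ y : ℝ) : ℂ) = star x ⬝ᵥ x := by
      rw [dotProduct, dotProduct]
      push_cast
      refine Finset.sum_congr rfl fun v _ => ?_
      simp only [hy]
      rw [Pi.star_apply, Complex.star_def, mul_comm ((starRingEnd ℂ) (x v)), Complex.mul_conj,
        Complex.normSq_eq_norm_sq]
      push_cast
      ring
    have := this.trans hdot
    exact_mod_cast this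
  have habs : ∀ u v, ‖hermAdj E u v‖ = adjUnderlying E u v := by
    intro u v
    by_cases h1 : E u v <;> by_cases h2 : E v u <;> simp [hermAdj, adjUnderlying, h1, h2]
  have hlval : star x ⬝ᵥ (hermAdj E *ᵥ x) = (l : ℂ) := by
    rw [hx, dotProduct_smul, hdot, smul_eq_mul, mul_one]
  have key : |l| ≤ y ⬝ᵥ (adjUnderlying E *ᵥ y) := by
    have h1 : |l| = ‖star x ⬝ᵥ (hermAdj E *ᵥ x)‖ := by
      rw [hlval, Complex.norm_real, Real.norm_eq_abs]
    rw [h1, dotProduct]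
    calc ‖∑ u, star x u * (hermAdj E *ᵥ x) u‖
        ≤ ∑ u, ‖star x u * (hermAdj E *ᵥ x) u‖ :=
          norm_sum_le _ _
      _ ≤ ∑ u, y u * (adjUnderlying E *ᵥ y) u := by
          refine Finset.sum_le_sum fun u _ => ?_
          rw [norm_mul]
          have : ‖star x u‖ = y u := by simp [hy]
          rw [this]
          refine mul_le_mul_of_nonneg_left ?_ (norm_nonneg _)
          rw [Matrix.mulVec, dotProduct, Matrix.mulVec, dotProduct]
          calc ‖∑ v, hermAdj E u v * x v‖
              ≤ ∑ v, ‖hermAdj E u v * x v‖ := norm_sum_le _ _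
            _ = ∑ v, adjUnderlying E u v * y v := by
                refine Finset.sum_congr rfl fun v _ => ?_
                rw [norm_mul, habs]
      _ = y ⬝ᵥ (adjUnderlying E *ᵥ y) := rfl
  have := rayleigh_bound (adjUnderlying E) hA y
  rw [hyy, mul_one] at this
  exact key.trans this
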